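/- There exists an absolute constant c > 0 such that, in the perturbation setup, if additionally m ε ≤ 1, M is invertible, and c m ε Δ ‖M⁻¹‖ ≤ 1/2, then M̄ is invertible and ‖M⁻¹ − M̄⁻¹‖ ≤ c m ε Δ ‖M⁻¹‖². -/

import Mathlib

open scoped RealInnerProductSpace
open ContinuousLinearMap

theorem my_pow_sub_pow {A : Type*} [Ring A] (a b : A) (n : ℕ) :
    b ^ n - a ^ n = ∑ k ∈ Finset.range n, b ^ k * (b - a) * a ^ (n - 1 - k) := by
  induction n with
  | zero => simp
  | succ n ih =>
    rw [Finset.sum_range_succ']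
    have h1 : ∀ k ∈ Finset.range n,
        b ^ (k + 1) * (b - a) * a ^ (n + 1 - 1 - (k + 1))
          = b * (b ^ k * (b - a) * a ^ (n - 1 - k)) := by
      intro k hk
      have h : n + 1 - 1 - (k + 1) = n - 1 - k := by omega
      rw [h, pow_succ', mul_assoc, mul_assoc, mul_assoc]
    rw [Finset.sum_congr rfl h1, ← Finset.mul_sum, ← ih]
    have h2 : n + 1 - 1 - 0 = n := by omega
    rw [h2, pow_zero, one_mul, mul_sub, sub_mul, ← pow_succ', ← pow_succ']
    abel

theorem pow_apply_norm_le {H : Type*} [NormedAddCommGroup H] [NormedSpace ℝ H]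
    (T : H →L[ℝ] H) (hT : ‖T‖ ≤ 1) (i : ℕ) (x : H) : ‖(T ^ i) x‖ ≤ ‖x‖ := by
  induction i generalizing x with
  | zero => simp
  | succ n ih =>
    rw [pow_succ, ContinuousLinearMap.mul_apply]
    calc ‖(T ^ n) (T x)‖ ≤ ‖T x‖ := ih (T x)
      _ ≤ ‖T‖ * ‖x‖ := T.le_opNorm x
      _ ≤ 1 * ‖x‖ := by gcongr
      _ = ‖x‖ := one_mul _

def shiftVec {m : ℕ} (v : EuclideanSpace ℝ (Fin m)) (k : ℕ) : EuclideanSpace ℝ (Fin m) :=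
  WithLp.toLp 2 (fun j => if h : (j : ℕ) + k + 1 < m then v ⟨(j : ℕ) + k + 1, h⟩ else 0)

theorem shiftVec_norm_le {m : ℕ} (v : EuclideanSpace ℝ (Fin m)) (k : ℕ) :
    ‖shiftVec v k‖ ≤ ‖v‖ := by
  classical
  rw [EuclideanSpace.norm_eq, EuclideanSpace.norm_eq]
  apply Real.sqrt_le_sqrt
  set vv : ℕ → ℝ := fun n => if h : n < m then ‖v ⟨n, h⟩‖ ^ 2 else 0 with hvv
  have hvv0 : ∀ n, 0 ≤ vv n := by
    intro n; simp only [hvv]; split_ifs <;> positivity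
  calc ∑ j : Fin m, ‖shiftVec v k j‖ ^ 2
      = ∑ j ∈ Finset.range m, (fun j : ℕ => if j + k + 1 < m then vv (j + k + 1) else 0) j := by
        rw [← Fin.sum_univ_eq_sum_range]
        refine Finset.sum_congr rfl fun j _ => ?_
        simp only [shiftVec, hvv]
        split_ifs with h
        · simp [h]
        · simp
    _ = ∑ j ∈ Finset.range (m - (k + 1)), vv (j + k + 1) := by
        rw [← Finset.sum_filter]
        congr 1
        ext j
        simp only [Finset.mem_filter, Finset.mem_range]
        omega
    _ = ∑ i ∈ Finset.Ico (k + 1) m, vv i := by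
        rw [Finset.sum_Ico_eq_sum_range]
        exact Finset.sum_congr rfl fun j _ => by rw [show k + 1 + j = j + k + 1 by omega]
    _ ≤ ∑ i ∈ Finset.range m, vv i := by
        apply Finset.sum_le_sum_of_subset_of_nonneg
        · intro i hi
          simp only [Finset.mem_Ico] at hi
          simp only [Finset.mem_range]
          omega
        · intro i _ _; exact hvv0 i
    _ = ∑ i : Fin m, ‖v i‖ ^ 2 := by
        rw [← Fin.sum_univ_eq_sum_range]
        exact Finset.sum_congr rfl fun i _ => by simp [hvv, i.isLt]

theorem sum_abs_le_sqrt_mul_norm {m : ℕ} (v : EuclideanSpace ℝ (Fin m)) :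
    ∑ i : Fin m, |v i| ≤ Real.sqrt m * ‖v‖ := by
  have h := sq_sum_le_card_mul_sum_sq (s := Finset.univ) (f := fun i : Fin m => |v i|)
  simp only [Finset.card_univ, Fintype.card_fin, sq_abs] at h
  have hnorm : ‖v‖ = Real.sqrt (∑ i : Fin m, ‖v i‖ ^ 2) := EuclideanSpace.norm_eq v
  have h2 : Real.sqrt m * ‖v‖ = Real.sqrt ((m : ℝ) * ∑ i : Fin m, ‖v i‖ ^ 2) := by
    rw [hnorm, ← Real.sqrt_mul (by positivity)]
  rw [h2]
  rcases le_or_gt (∑ i : Fin m, |v i|) 0 with h0 | h0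
  · exact h0.trans (Real.sqrt_nonneg _)
  · refine (Real.le_sqrt' h0).mpr ?_
    simpa [Real.norm_eq_abs, sq_abs] using h

theorem key_identity {H : Type} [NormedAddCommGroup H] [NormedSpace ℝ H]
    (S S' : H →L[ℝ] H) (b : H) (m : ℕ)
    (R : EuclideanSpace ℝ (Fin m) →L[ℝ] H)
    (hR : ∀ v, R v = ∑ i : Fin m, v i • (S ^ (i : ℕ)) b)
    (v : EuclideanSpace ℝ (Fin m)) :
    ∑ i : Fin m, v i • ((S' ^ (i : ℕ)) b - (S ^ (i : ℕ)) b)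
      = ∑ k ∈ Finset.range m, (S' ^ k) ((S' - S) (R (shiftVec v k))) := by
  classical
  set vv : ℕ → ℝ := fun n => if h : n < m then v ⟨n, h⟩ else 0 with hvv
  set G : ℕ → H := fun i =>
    ∑ k ∈ Finset.range i, vv i • (S' ^ k) ((S' - S) ((S ^ (i - 1 - k)) b)) with hG
  have hstep : ∀ i : Fin m, v i • ((S' ^ (i : ℕ)) b - (S ^ (i : ℕ)) b) = G (i : ℕ) := by
    intro i
    have h0 : (S' ^ (i : ℕ)) b - (S ^ (i : ℕ)) b
        = ∑ k ∈ Finset.range (i : ℕ), (S' ^ k) ((S' - S) ((S ^ ((i : ℕ) - 1 - k)) b)) := by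
      have h := congrArg (fun T : H →L[ℝ] H => T b) (my_pow_sub_pow S S' (i : ℕ))
      simpa [ContinuousLinearMap.sub_apply, ContinuousLinearMap.sum_apply, ContinuousLinearMap.mul_apply] using h
    rw [h0, Finset.smul_sum, hG]
    refine Finset.sum_congr rfl fun k _ => ?_
    have : vv (i : ℕ) = v i := by simp [hvv, i.isLt]
    rw [this]
  calc ∑ i : Fin m, v i • ((S' ^ (i : ℕ)) b - (S ^ (i : ℕ)) b)
      = ∑ i : Fin m, G (i : ℕ) := Finset.sum_congr rfl fun i _ => hstep i
    _ = ∑ i ∈ Finset.range m, G i := Fin.sum_univ_eq_sum_range G m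
    _ = ∑ k ∈ Finset.range m, ∑ i ∈ Finset.Ico (k + 1) m,
          vv i • (S' ^ k) ((S' - S) ((S ^ (i - 1 - k)) b)) := by
        have h := Finset.sum_Ico_Ico_comm' 0 m
          (fun k i => vv i • (S' ^ k) ((S' - S) ((S ^ (i - 1 - k)) b)))
        simpa [Nat.Ico_zero_eq_range, hG] using h.symm
    _ = ∑ k ∈ Finset.range m, (S' ^ k) ((S' - S) (R (shiftVec v k))) := by
        refine Finset.sum_congr rfl fun k hk => ?_
        have hRw : R (shiftVec v k)
            = ∑ j ∈ Finset.range (m - (k + 1)), vv (j + k + 1) • (S ^ j) b := by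
          rw [hR]
          have h1 : ∀ j : Fin m, (shiftVec v k) j • (S ^ (j : ℕ)) b
              = (fun j : ℕ => if j + k + 1 < m then vv (j + k + 1) • (S ^ j) b else 0) (j : ℕ) := by
            intro j
            simp only [shiftVec, hvv]
            split_ifs with h
            · simp [h]
            · simp
          rw [Finset.sum_congr rfl fun j _ => h1 j,
            Fin.sum_univ_eq_sum_range (fun j : ℕ => if j + k + 1 < m then vv (j + k + 1) • (S ^ j) b else 0) m,
            ← Finset.sum_filter]
          congr 1
          ext j
          simp only [Finset.mem_filter, Finset.mem_range]
          omega
        rw [hRw, map_sum, map_sum, Finset.sum_Ico_eq_sum_range]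
        refine Finset.sum_congr rfl fun j hj => ?_
        have e1 : k + 1 + j = j + k + 1 := by omega
        have e2 : j + k + 1 - 1 - k = j := by omega
        rw [e1, e2, map_smul, map_smul]


set_option maxHeartbeats 1000000 in
/-- There is an absolute constant `c > 0` such that, in the perturbation setup, if `m ε ≤ 1`,
`M` is invertible and `c m ε Δ ‖M⁻¹‖ ≤ 1/2`, then `M̄` is invertible and
`‖M⁻¹ − M̄⁻¹‖ ≤ c m ε Δ ‖M⁻¹‖²`. -/
theorem stmt15 :
    ∃ c : ℝ, 0 < c ∧
      ∀ (H : Type) (_ : NormedAddCommGroup H) (_ : InnerProductSpace ℝ H) (_ : CompleteSpace H)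
        (S S' : H →L[ℝ] H),
        IsSelfAdjoint S → IsSelfAdjoint S' →
        (∀ x, 0 ≤ ⟪S x, x⟫) → (∀ x, 0 ≤ ⟪S' x, x⟫) → ‖S‖ ≤ 1 → ‖S'‖ ≤ 1 →
        ∀ (b b' : H) (ε : ℝ), 0 < ε → ‖S - S'‖ ≤ ε → ‖b - b'‖ ≤ ε →
        ∀ m : ℕ, 1 ≤ m →
        ∀ (R R' : EuclideanSpace ℝ (Fin m) →L[ℝ] H),
          (∀ v, R v = ∑ i : Fin m, v i • (S ^ (i : ℕ)) b) →
          (∀ v, R' v = ∑ i : Fin m, v i • (S' ^ (i : ℕ)) b') →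
        ∀ (M M' Mp : EuclideanSpace ℝ (Fin m) →L[ℝ] EuclideanSpace ℝ (Fin m)),
          M = (adjoint R) ∘L (S ∘L R) →
          M' = (adjoint R') ∘L (S' ∘L R') →
          Mp = (adjoint R) ∘L R →
        ∀ Δ : ℝ, Δ = max ‖Mp‖ (1 / (m : ℝ)) →
          (m : ℝ) * ε ≤ 1 →
          IsUnit M →
          c * m * ε * Δ * ‖Ring.inverse M‖ ≤ 1 / 2 →
          IsUnit M' ∧
            ‖Ring.inverse M - Ring.inverse M'‖ ≤ c * m * ε * Δ * ‖Ring.inverse M‖ ^ 2 := by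
  refine ⟨22, by norm_num, ?_⟩
  intro H _ _ _ S S' hSsa hS'sa hSpos hS'pos hSn hS'n b b' ε hε hSS' hbb' m hm
    R R' hR hR' M M' Mp hM hM' hMp Δ hΔ hmε hMu hsmall
  have hm1 : (1 : ℝ) ≤ (m : ℝ) := by exact_mod_cast hm
  have hm0 : (0 : ℝ) < (m : ℝ) := by linarith
  have hε0 : 0 ≤ ε := hε.le
  have hΔ0 : (0 : ℝ) < Δ := by
    rw [hΔ]; exact lt_of_lt_of_le (by positivity) (le_max_right _ _)
  have hsΔ0 : 0 ≤ Real.sqrt Δ := Real.sqrt_nonneg Δ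
  have hΔm : 1 / (m : ℝ) ≤ Δ := hΔ ▸ le_max_right _ _
  have hMpΔ : ‖Mp‖ ≤ Δ := hΔ ▸ le_max_left _ _
  have hRn : ‖R‖ ≤ Real.sqrt Δ := by
    have h1 : ‖R‖ * ‖R‖ ≤ Δ := by
      rw [← ContinuousLinearMap.norm_adjoint_comp_self R]
      exact hMp ▸ hMpΔ
    nlinarith [Real.mul_self_sqrt hΔ0.le, norm_nonneg R, Real.sqrt_nonneg Δ]
  have key1 : ∀ v, ‖R' v - R v‖
      ≤ ((m : ℝ) * ε * Real.sqrt Δ + Real.sqrt m * ε) * ‖v‖ := by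
    intro v
    have hsplit : R' v - R v = (∑ i : Fin m, v i • (S' ^ (i : ℕ)) (b' - b))
        + ∑ i : Fin m, v i • ((S' ^ (i : ℕ)) b - (S ^ (i : ℕ)) b) := by
      rw [hR, hR', ← Finset.sum_sub_distrib, ← Finset.sum_add_distrib]
      refine Finset.sum_congr rfl fun i _ => ?_
      rw [map_sub, ← smul_sub, ← smul_add]
      congr 1
      abel
    rw [hsplit]
    have hA : ‖∑ i : Fin m, v i • (S' ^ (i : ℕ)) (b' - b)‖ ≤ Real.sqrt m * ε * ‖v‖ := by
      calc ‖∑ i : Fin m, v i • (S' ^ (i : ℕ)) (b' - b)‖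
          ≤ ∑ i : Fin m, ‖v i • (S' ^ (i : ℕ)) (b' - b)‖ := norm_sum_le _ _
        _ = ∑ i : Fin m, |v i| * ‖(S' ^ (i : ℕ)) (b' - b)‖ := by
            simp [norm_smul, Real.norm_eq_abs]
        _ ≤ ∑ i : Fin m, |v i| * ε := by
            refine Finset.sum_le_sum fun i _ => ?_
            have h1 : ‖(S' ^ (i : ℕ)) (b' - b)‖ ≤ ‖b' - b‖ := pow_apply_norm_le S' hS'n _ _
            have h2 : ‖b' - b‖ ≤ ε := by rw [norm_sub_rev]; exact hbb'
            exact mul_le_mul_of_nonneg_left (h1.trans h2) (abs_nonneg _)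
        _ = (∑ i : Fin m, |v i|) * ε := by rw [Finset.sum_mul]
        _ ≤ (Real.sqrt m * ‖v‖) * ε :=
            mul_le_mul_of_nonneg_right (sum_abs_le_sqrt_mul_norm v) hε0
        _ = Real.sqrt m * ε * ‖v‖ := by ring
    have hB : ‖∑ i : Fin m, v i • ((S' ^ (i : ℕ)) b - (S ^ (i : ℕ)) b)‖
        ≤ (m : ℝ) * ε * Real.sqrt Δ * ‖v‖ := by
      rw [key_identity S S' b m R hR v]
      calc ‖∑ k ∈ Finset.range m, (S' ^ k) ((S' - S) (R (shiftVec v k)))‖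
          ≤ ∑ k ∈ Finset.range m, ‖(S' ^ k) ((S' - S) (R (shiftVec v k)))‖ := norm_sum_le _ _
        _ ≤ ∑ _k ∈ Finset.range m, ε * (Real.sqrt Δ * ‖v‖) := by
            refine Finset.sum_le_sum fun k _ => ?_
            calc ‖(S' ^ k) ((S' - S) (R (shiftVec v k)))‖
                ≤ ‖(S' - S) (R (shiftVec v k))‖ := pow_apply_norm_le S' hS'n _ _
              _ ≤ ‖S' - S‖ * ‖R (shiftVec v k)‖ := le_opNorm _ _
              _ ≤ ε * (Real.sqrt Δ * ‖v‖) := by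
                  refine mul_le_mul ?_ ?_ (norm_nonneg _) hε0
                  · rw [norm_sub_rev]; exact hSS'
                  · calc ‖R (shiftVec v k)‖ ≤ ‖R‖ * ‖shiftVec v k‖ := le_opNorm _ _
                      _ ≤ Real.sqrt Δ * ‖v‖ :=
                          mul_le_mul hRn (shiftVec_norm_le v k) (norm_nonneg _) hsΔ0
        _ = (m : ℝ) * (ε * (Real.sqrt Δ * ‖v‖)) := by
            rw [Finset.sum_const, Finset.card_range, nsmul_eq_mul]
        _ = (m : ℝ) * ε * Real.sqrt Δ * ‖v‖ := by ring
    calc ‖(∑ i : Fin m, v i • (S' ^ (i : ℕ)) (b' - b))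
          + ∑ i : Fin m, v i • ((S' ^ (i : ℕ)) b - (S ^ (i : ℕ)) b)‖
        ≤ ‖∑ i : Fin m, v i • (S' ^ (i : ℕ)) (b' - b)‖
          + ‖∑ i : Fin m, v i • ((S' ^ (i : ℕ)) b - (S ^ (i : ℕ)) b)‖ := norm_add_le _ _
      _ ≤ Real.sqrt m * ε * ‖v‖ + (m : ℝ) * ε * Real.sqrt Δ * ‖v‖ := add_le_add hA hB
      _ = ((m : ℝ) * ε * Real.sqrt Δ + Real.sqrt m * ε) * ‖v‖ := by ring
  have hsqm : Real.sqrt m * ε ≤ (m : ℝ) * ε * Real.sqrt Δ := by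
    have h1 : Real.sqrt (1 / (m : ℝ)) ≤ Real.sqrt Δ := Real.sqrt_le_sqrt hΔm
    have h2 : Real.sqrt (m : ℝ) * Real.sqrt (1 / (m : ℝ)) = 1 := by
      rw [← Real.sqrt_mul (by positivity), mul_one_div, div_self (ne_of_gt hm0), Real.sqrt_one]
    have h3 : (0 : ℝ) ≤ Real.sqrt m := Real.sqrt_nonneg _
    have h4 : Real.sqrt m * Real.sqrt m = (m : ℝ) := Real.mul_self_sqrt hm0.le
    have h6 : Real.sqrt (m : ℝ) * Real.sqrt (m : ℝ) * ε * Real.sqrt (1 / (m : ℝ))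
        ≤ Real.sqrt (m : ℝ) * Real.sqrt (m : ℝ) * ε * Real.sqrt Δ :=
      mul_le_mul_of_nonneg_left h1 (by positivity)
    have h7 : Real.sqrt (m : ℝ) * ε
        = Real.sqrt (m : ℝ) * Real.sqrt (m : ℝ) * ε * Real.sqrt (1 / (m : ℝ)) := by
      rw [show Real.sqrt (m : ℝ) * Real.sqrt (m : ℝ) * ε * Real.sqrt (1 / (m : ℝ))
          = (Real.sqrt (m : ℝ) * Real.sqrt (1 / (m : ℝ))) * (Real.sqrt (m : ℝ) * ε) from by ring,
        h2, one_mul]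
    calc Real.sqrt (m : ℝ) * ε
        = Real.sqrt (m : ℝ) * Real.sqrt (m : ℝ) * ε * Real.sqrt (1 / (m : ℝ)) := h7
      _ ≤ Real.sqrt (m : ℝ) * Real.sqrt (m : ℝ) * ε * Real.sqrt Δ := h6
      _ = (m : ℝ) * ε * Real.sqrt Δ := by rw [h4]
  have hRR' : ‖R' - R‖ ≤ 2 * (m : ℝ) * ε * Real.sqrt Δ := by
    refine opNorm_le_bound _ (by positivity) fun v => ?_
    rw [ContinuousLinearMap.sub_apply]
    have h5 : (m : ℝ) * ε * Real.sqrt Δ + Real.sqrt m * ε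
        ≤ 2 * (m : ℝ) * ε * Real.sqrt Δ := by linarith
    calc ‖R' v - R v‖ ≤ ((m : ℝ) * ε * Real.sqrt Δ + Real.sqrt m * ε) * ‖v‖ := key1 v
      _ ≤ 2 * (m : ℝ) * ε * Real.sqrt Δ * ‖v‖ :=
          mul_le_mul_of_nonneg_right h5 (norm_nonneg v)
  have hR'n : ‖R'‖ ≤ 3 * Real.sqrt Δ := by
    have heq : R + (R' - R) = R' := by abel
    have hmε0 : 0 ≤ (m : ℝ) * ε := by positivity
    calc ‖R'‖ = ‖R + (R' - R)‖ := by rw [heq]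
      _ ≤ ‖R‖ + ‖R' - R‖ := norm_add_le _ _
      _ ≤ Real.sqrt Δ + 2 * (m : ℝ) * ε * Real.sqrt Δ := add_le_add hRn hRR'
      _ ≤ 3 * Real.sqrt Δ := by
          have h6 : (m : ℝ) * ε * Real.sqrt Δ ≤ 1 * Real.sqrt Δ :=
            mul_le_mul_of_nonneg_right hmε hsΔ0
          linarith
  have hMM' : ‖M - M'‖ ≤ 11 * (m : ℝ) * ε * Δ := by
    have hdecomp : M - M' = (adjoint (R - R')) ∘L (S ∘L R)
        + ((adjoint R') ∘L ((S - S') ∘L R) + (adjoint R') ∘L (S' ∘L (R - R'))) := by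
      rw [hM, hM', map_sub]
      simp only [ContinuousLinearMap.sub_comp, ContinuousLinearMap.comp_sub]
      abel
    have hadj : ‖adjoint (R - R')‖ = ‖R - R'‖ := LinearIsometryEquiv.norm_map _ _
    have hadj' : ‖(adjoint R' : _)‖ = ‖R'‖ := LinearIsometryEquiv.norm_map _ _
    have hRR'2 : ‖R - R'‖ ≤ 2 * (m : ℝ) * ε * Real.sqrt Δ := by
      rw [norm_sub_rev]; exact hRR'
    have hsq : Real.sqrt Δ * Real.sqrt Δ = Δ := Real.mul_self_sqrt hΔ0.le
    have hn1 : ‖(adjoint (R - R')) ∘L (S ∘L R)‖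
        ≤ (2 * (m : ℝ) * ε * Real.sqrt Δ) * (1 * Real.sqrt Δ) := by
      calc ‖(adjoint (R - R')) ∘L (S ∘L R)‖
          ≤ ‖adjoint (R - R')‖ * ‖S ∘L R‖ := opNorm_comp_le _ _
        _ ≤ (2 * (m : ℝ) * ε * Real.sqrt Δ) * (1 * Real.sqrt Δ) := by
            refine mul_le_mul (hadj.trans_le hRR'2) ?_ (norm_nonneg _) (by positivity)
            exact (opNorm_comp_le _ _).trans (mul_le_mul hSn hRn (norm_nonneg _) (by norm_num))
    have hn2 : ‖(adjoint R') ∘L ((S - S') ∘L R)‖ ≤ (3 * Real.sqrt Δ) * (ε * Real.sqrt Δ) := by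
      calc ‖(adjoint R') ∘L ((S - S') ∘L R)‖
          ≤ ‖(adjoint R' : _)‖ * ‖(S - S') ∘L R‖ := opNorm_comp_le _ _
        _ ≤ (3 * Real.sqrt Δ) * (ε * Real.sqrt Δ) := by
            refine mul_le_mul (hadj'.trans_le hR'n) ?_ (norm_nonneg _) (by positivity)
            exact (opNorm_comp_le _ _).trans (mul_le_mul hSS' hRn (norm_nonneg _) hε0)
    have hn3 : ‖(adjoint R') ∘L (S' ∘L (R - R'))‖
        ≤ (3 * Real.sqrt Δ) * (1 * (2 * (m : ℝ) * ε * Real.sqrt Δ)) := by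
      calc ‖(adjoint R') ∘L (S' ∘L (R - R'))‖
          ≤ ‖(adjoint R' : _)‖ * ‖S' ∘L (R - R')‖ := opNorm_comp_le _ _
        _ ≤ (3 * Real.sqrt Δ) * (1 * (2 * (m : ℝ) * ε * Real.sqrt Δ)) := by
            refine mul_le_mul (hadj'.trans_le hR'n) ?_ (norm_nonneg _) (by positivity)
            exact (opNorm_comp_le _ _).trans
              (mul_le_mul hS'n hRR'2 (norm_nonneg _) (by norm_num))
    calc ‖M - M'‖ = ‖(adjoint (R - R')) ∘L (S ∘L R)
          + ((adjoint R') ∘L ((S - S') ∘L R) + (adjoint R') ∘L (S' ∘L (R - R')))‖ := by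
          rw [← hdecomp]
      _ ≤ ‖(adjoint (R - R')) ∘L (S ∘L R)‖
          + (‖(adjoint R') ∘L ((S - S') ∘L R)‖ + ‖(adjoint R') ∘L (S' ∘L (R - R'))‖) :=
          (norm_add_le _ _).trans (by gcongr; exact norm_add_le _ _)
      _ ≤ (2 * (m : ℝ) * ε * Real.sqrt Δ) * (1 * Real.sqrt Δ)
          + ((3 * Real.sqrt Δ) * (ε * Real.sqrt Δ)
            + (3 * Real.sqrt Δ) * (1 * (2 * (m : ℝ) * ε * Real.sqrt Δ))) := by
          exact add_le_add hn1 (add_le_add hn2 hn3)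
      _ = 8 * ((m : ℝ) * ε * (Real.sqrt Δ * Real.sqrt Δ))
          + 3 * (ε * (Real.sqrt Δ * Real.sqrt Δ)) := by ring
      _ = 8 * ((m : ℝ) * ε * Δ) + 3 * (ε * Δ) := by rw [hsq]
      _ ≤ 11 * (m : ℝ) * ε * Δ := by
          nlinarith [mul_nonneg (mul_nonneg (sub_nonneg.mpr hm1) hε0) hΔ0.le]
  -- inverse perturbation
  obtain ⟨u, hu⟩ := hMu
  set uinv : EuclideanSpace ℝ (Fin m) →L[ℝ] EuclideanSpace ℝ (Fin m) := ↑u⁻¹ with huinv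
  have hinvM : Ring.inverse M = uinv := by rw [← hu, Ring.inverse_unit]
  set a : ℝ := ‖uinv‖ with ha
  have ha0 : 0 ≤ a := norm_nonneg _
  have hsm : 11 * (m : ℝ) * ε * Δ * a ≤ 1 / 4 := by
    rw [hinvM, ← ha] at hsmall
    linarith
  set X : EuclideanSpace ℝ (Fin m) →L[ℝ] EuclideanSpace ℝ (Fin m) := uinv * (M - M') with hX
  have hXle : ‖X‖ ≤ 11 * (m : ℝ) * ε * Δ * a := by
    calc ‖X‖ ≤ a * ‖M - M'‖ := norm_mul_le _ _
      _ ≤ a * (11 * (m : ℝ) * ε * Δ) := mul_le_mul_of_nonneg_left hMM' ha0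
      _ = 11 * (m : ℝ) * ε * Δ * a := by ring
  have hX4 : ‖X‖ ≤ 1 / 4 := hXle.trans hsm
  have hX1 : ‖X‖ < 1 := lt_of_le_of_lt hX4 (by norm_num)
  set w := Units.oneSub X hX1 with hwdef
  have hw : (↑w : EuclideanSpace ℝ (Fin m) →L[ℝ] EuclideanSpace ℝ (Fin m)) = 1 - X := rfl
  set winv : EuclideanSpace ℝ (Fin m) →L[ℝ] EuclideanSpace ℝ (Fin m) := ↑w⁻¹ with hwinv
  have hM'eq : (↑(u * w) : EuclideanSpace ℝ (Fin m) →L[ℝ] EuclideanSpace ℝ (Fin m)) = M' := by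
    rw [Units.val_mul, hw, mul_sub, mul_one, hX, huinv, ← mul_assoc, Units.mul_inv, one_mul, hu]
    abel
  refine ⟨⟨u * w, hM'eq⟩, ?_⟩
  have hinvM' : Ring.inverse M' = winv * uinv := by
    rw [← hM'eq, Ring.inverse_unit, mul_inv_rev, Units.val_mul]
  have hwid : winv = 1 + winv * X := by
    have h7 : winv * ↑w = 1 := w.inv_mul
    rw [hw, mul_sub, mul_one] at h7
    exact eq_add_of_sub_eq h7
  have hnorm1 : ‖(1 : EuclideanSpace ℝ (Fin m) →L[ℝ] EuclideanSpace ℝ (Fin m))‖ ≤ 1 := by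
    rw [ContinuousLinearMap.one_def]; exact norm_id_le
  have hwn : ‖winv‖ ≤ 2 := by
    have h8 : ‖winv‖ ≤ 1 + ‖winv‖ * (1 / 4) := by
      calc ‖winv‖ = ‖1 + winv * X‖ := by rw [← hwid]
        _ ≤ ‖(1 : EuclideanSpace ℝ (Fin m) →L[ℝ] EuclideanSpace ℝ (Fin m))‖ + ‖winv * X‖ :=
            norm_add_le _ _
        _ ≤ 1 + ‖winv‖ * (1 / 4) := add_le_add hnorm1
            ((norm_mul_le _ _).trans (mul_le_mul_of_nonneg_left hX4 (norm_nonneg _)))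
    linarith [norm_nonneg winv]
  have h9 : (1 : EuclideanSpace ℝ (Fin m) →L[ℝ] EuclideanSpace ℝ (Fin m)) - winv
      = -(winv * X) := by
    conv_lhs => rw [hwid]
    abel
  have hdiff : Ring.inverse M - Ring.inverse M' = -(winv * X) * uinv := by
    rw [hinvM, hinvM']
    calc uinv - winv * uinv = (1 - winv) * uinv := by rw [sub_mul, one_mul]
      _ = -(winv * X) * uinv := by rw [h9]
  rw [hdiff, hinvM, ← ha]
  calc ‖-(winv * X) * uinv‖ ≤ ‖-(winv * X)‖ * a := norm_mul_le _ _
    _ = ‖winv * X‖ * a := by rw [norm_neg]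
    _ ≤ (‖winv‖ * ‖X‖) * a := mul_le_mul_of_nonneg_right (norm_mul_le _ _) ha0
    _ ≤ (2 * (11 * (m : ℝ) * ε * Δ * a)) * a := by
        refine mul_le_mul_of_nonneg_right ?_ ha0
        exact mul_le_mul hwn hXle (norm_nonneg _) (by norm_num)
    _ = 22 * (m : ℝ) * ε * Δ * a ^ 2 := by ring
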